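/- If f is a Hecke-multiplicative function and d is a squarefree positive integer, then for any positive integers m, |f(md)| ≤ Σ_{ab = d} |f(a)|·|f(m/b)|, where f(m/b) = 0 if b ∤ m. -/

import Mathlib

open Finset

def HeckeMult (f : ℕ → ℂ) : Prop :=
  f 1 = 1 ∧ ∀ m n : ℕ, 0 < m → 0 < n →
    f m * f n = ∑ d ∈ (Nat.gcd m n).divisors, f (m * n / d ^ 2)

lemma hecke_identity (f : ℕ → ℂ) (hf : HeckeMult f) (m d : ℕ) (hm : 0 < m) (hd : 0 < d) :
    f (m * d) = ∑ x ∈ (Nat.gcd m d).divisorsAntidiagonal,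
      (ArithmeticFunction.moebius x.1 : ℂ) * (f (m / x.1) * f (d / x.1)) := by
  set g := Nat.gcd m d with hgdef
  have hg0 : 0 < g := Nat.gcd_pos_of_pos_left d hm
  have hgm : g ∣ m := Nat.gcd_dvd_left m d
  have hgd : g ∣ d := Nat.gcd_dvd_right m d
  have hmono : ∀ a b : ℕ, a ∣ b → b ∈ {x : ℕ | x ∣ g} → a ∈ {x : ℕ | x ∣ g} :=
    fun a b hab hb => hab.trans hb
  have main : ∀ n > 0, n ∈ {x : ℕ | x ∣ g} →
      (∑ i ∈ n.divisors, f (m * d / (g / i) ^ 2)) =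
        f (m / (g / n)) * f (d / (g / n)) := by
    intro n hn hng
    simp only [Set.mem_setOf_eq] at hng
    set e := g / n with hedef
    have hen : e * n = g := Nat.div_mul_cancel hng
    have heg : e ∣ g := Dvd.intro n hen
    have hem : e ∣ m := heg.trans hgm
    have hed : e ∣ d := heg.trans hgd
    have he0 : 0 < e := Nat.pos_of_dvd_of_pos heg hg0
    have hme : 0 < m / e := Nat.div_pos (Nat.le_of_dvd hm hem) he0
    have hde : 0 < d / e := Nat.div_pos (Nat.le_of_dvd hd hed) he0
    have hgcd : Nat.gcd (m / e) (d / e) = n := by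
      have h1 : Nat.gcd (m / e) (d / e) * e = g := by
        rw [← Nat.gcd_mul_right, Nat.div_mul_cancel hem, Nat.div_mul_cancel hed]
      have h2 : n * e = g := by rw [mul_comm]; exact hen
      exact Nat.eq_of_mul_eq_mul_right he0 (h1.trans h2.symm)
    have hrel := hf.2 (m / e) (d / e) hme hde
    rw [hgcd] at hrel
    rw [hrel, ← Nat.sum_div_divisors]
    refine Finset.sum_congr rfl fun c hc => ?_
    have hcn : c ∣ n := Nat.dvd_of_mem_divisors hc
    have hc0 : 0 < c := Nat.pos_of_mem_divisors hc
    obtain ⟨u, hu⟩ := hcn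
    have hu0 : 0 < u := Nat.pos_of_ne_zero (fun h => by rw [h, Nat.mul_zero] at hu; omega)
    have hnc : n / c = u := by rw [hu, Nat.mul_div_cancel_left _ hc0]
    have hgu : g / (n / c) = e * c := by
      rw [hnc]
      have : g = e * c * u := by rw [← hen, hu]; ring
      rw [this, Nat.mul_div_cancel _ hu0]
    rw [hgu]
    have h3 : m / e * (d / e) = m * d / (e * e) := Nat.div_mul_div_comm hem hed
    rw [h3, Nat.div_div_eq_div_mul]
    congr 1
    ring_nf
  have := (ArithmeticFunction.sum_eq_iff_sum_smul_moebius_eq_on {x : ℕ | x ∣ g}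
    hmono).mp main g hg0 (dvd_refl g)
  rw [Nat.div_self hg0, pow_two, Nat.mul_one, Nat.div_one] at this
  rw [← this]
  refine Finset.sum_congr rfl fun x hx => ?_
  rw [Nat.mem_divisorsAntidiagonal] at hx
  have hx2 : g / x.2 = x.1 := by
    rcases Nat.eq_zero_or_pos x.2 with h | h
    · rw [h, Nat.mul_zero] at hx; omega
    · rw [← hx.1, Nat.mul_div_cancel _ h]
  rw [hx2, zsmul_eq_mul]

theorem hecke_fmd (f : ℕ → ℂ) (hf : HeckeMult f) (d : ℕ) (hd : Squarefree d)
    (m : ℕ) (hm : 0 < m) :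
    ‖f (m * d)‖ ≤
      ∑ ab ∈ Nat.divisorsAntidiagonal d,
        ‖f ab.1‖ * ‖(if ab.2 ∣ m then f (m / ab.2) else 0)‖ := by
  have hd0 : 0 < d := Nat.pos_of_ne_zero hd.ne_zero
  set g := Nat.gcd m d with hgdef
  have hg0 : 0 < g := Nat.gcd_pos_of_pos_left d hm
  have hgm : g ∣ m := Nat.gcd_dvd_left m d
  have hgd : g ∣ d := Nat.gcd_dvd_right m d
  have key := hecke_identity f hf m d hm hd0
  rw [key]
  have step1 : ‖(∑ x ∈ g.divisorsAntidiagonal,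
        (ArithmeticFunction.moebius x.1 : ℂ) * (f (m / x.1) * f (d / x.1)))‖ ≤
      ∑ x ∈ g.divisorsAntidiagonal,
        ‖f (d / x.1)‖ * ‖f (m / x.1)‖ := by
    refine (norm_sum_le _ _).trans (Finset.sum_le_sum fun x _ => ?_)
    rw [norm_mul, norm_mul]
    have hmu : ‖((ArithmeticFunction.moebius x.1 : ℤ) : ℂ)‖ ≤ 1 := by
      rw [Complex.norm_intCast]
      exact_mod_cast ArithmeticFunction.abs_moebius_le_one
    calc ‖((ArithmeticFunction.moebius x.1 : ℤ) : ℂ)‖ *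
          (‖f (m / x.1)‖ * ‖f (d / x.1)‖)
        ≤ 1 * (‖f (m / x.1)‖ * ‖f (d / x.1)‖) := by
          apply mul_le_mul_of_nonneg_right hmu
          positivity
      _ = ‖f (d / x.1)‖ * ‖f (m / x.1)‖ := by ring
  refine step1.trans ?_
  rw [Nat.sum_divisorsAntidiagonal
    (f := fun a b => ‖f (d / a)‖ * ‖f (m / a)‖)]
  refine le_of_eq_of_le ?_ (Finset.sum_le_sum_of_subset_of_nonneg
    (s := (g.divisors).image (fun i : ℕ => (d / i, i))) ?_ ?_)
  · rw [Finset.sum_image (fun a _ b _ h => (Prod.ext_iff.mp h).2)]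
    refine Finset.sum_congr rfl fun i hi => ?_
    have him : i ∣ m := (Nat.dvd_of_mem_divisors hi).trans hgm
    simp only [if_pos him]
  · intro ab hab
    obtain ⟨i, hi, rfl⟩ := Finset.mem_image.mp hab
    rw [Nat.mem_divisorsAntidiagonal]
    exact ⟨Nat.div_mul_cancel ((Nat.dvd_of_mem_divisors hi).trans hgd), hd0.ne'⟩
  · intro ab _ _
    exact mul_nonneg (norm_nonneg _) (norm_nonneg _)
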